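/- Let ξ be a real random variable whose CDF is continuous and strictly increasing at its (1−α)-quantile c, and suppose random variables ĉ_n → c in probability and S_n ⇒ ξ in distribution. Then P(S_n > ĉ_n) → 1 − P(ξ ≤ c) = α. -/

import Mathlib

open Set Filter MeasureTheory

/-- if the CDF `F` of `ξ` (law `ν`) is continuous and strictly
increasing at its `(1−α)`-quantile `c`, `ĉₙ → c` in probability and `Sₙ ⇒ ξ`
in distribution, then `P(Sₙ > ĉₙ) → 1 − P(ξ ≤ c) = α`. -/
theorem stmt16 {Ω : Type*} [MeasurableSpace Ω] (P : Measure Ω) [IsProbabilityMeasure P]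
    (ν : Measure ℝ) [IsProbabilityMeasure ν]
    (F : ℝ → ℝ) (hF : ∀ x, F x = (ν (Iic x)).toReal)
    (α : ℝ) (hα : α ∈ Ioo (0:ℝ) 1)
    (c : ℝ) (hc : c = sInf {x : ℝ | 1 - α ≤ F x})
    (hFc : ContinuousAt F c)
    (hFs : ∃ ε > 0, StrictMonoOn F (Ioo (c - ε) (c + ε)))
    (S ch : ℕ → Ω → ℝ) (hS : ∀ n, Measurable (S n)) (hch : ∀ n, Measurable (ch n))
    (hdist : ∀ x : ℝ, ContinuousAt F x →
      Tendsto (fun n => (P {ω | S n ω ≤ x}).toReal) atTop (nhds (F x)))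
    (hprob : ∀ ε > 0, Tendsto (fun n => (P {ω | ε ≤ |ch n ω - c|}).toReal) atTop (nhds 0)) :
    Tendsto (fun n => (P {ω | ch n ω < S n ω}).toReal) atTop (nhds (1 - F c)) ∧
      1 - F c = α := by
  obtain ⟨hα0, hα1⟩ := hα
  -- F equals the cdf of ν
  have hFeq : F = fun x => ProbabilityTheory.cdf ν x := by
    funext x
    rw [hF x, ProbabilityTheory.cdf_eq_real, measureReal_def]
  have hFmono : Monotone F := by
    rw [hFeq]; exact ProbabilityTheory.monotone_cdf ν
  have hTop : Tendsto F atTop (nhds 1) := by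
    rw [hFeq]; exact ProbabilityTheory.tendsto_cdf_atTop ν
  have hBot : Tendsto F atBot (nhds 0) := by
    rw [hFeq]; exact ProbabilityTheory.tendsto_cdf_atBot ν
  set A : Set ℝ := {x : ℝ | 1 - α ≤ F x} with hA
  -- A is nonempty and bounded below
  have hne : A.Nonempty := by
    have h1 : ∀ᶠ x in atTop, 1 - α ≤ F x :=
      hTop.eventually (eventually_ge_nhds (by linarith))
    obtain ⟨x, hx⟩ := h1.exists
    exact ⟨x, hx⟩
  have hbdd : BddBelow A := by
    have h1 : ∀ᶠ x in atBot, F x < 1 - α :=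
      hBot.eventually (eventually_lt_nhds (by linarith))
    obtain ⟨x0, hx0⟩ := h1.exists
    refine ⟨x0, fun a ha => ?_⟩
    by_contra h
    push_neg at h
    have : F a ≤ F x0 := hFmono h.le
    have : F a < 1 - α := lt_of_le_of_lt this hx0
    exact absurd ha (by simpa [hA] using not_le.mpr this)
  -- F c = 1 - α
  have hFcval : F c = 1 - α := by
    have h1 : 1 - α ≤ F c := by
      have htend : Tendsto F (nhdsWithin c (Ioi c)) (nhds (F c)) :=
        hFc.continuousWithinAt
      refine ge_of_tendsto htend ?_
      filter_upwards [self_mem_nhdsWithin] with t ht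
      obtain ⟨a, haA, hac⟩ := (csInf_lt_iff hbdd hne).mp (hc ▸ ht)
      exact le_trans (show (1:ℝ) - α ≤ F a from haA) (hFmono hac.le)
    have h2 : F c ≤ 1 - α := by
      have htend : Tendsto F (nhdsWithin c (Iio c)) (nhds (F c)) :=
        hFc.continuousWithinAt
      refine le_of_tendsto htend ?_
      filter_upwards [self_mem_nhdsWithin] with t ht
      have : t ∉ A := fun h => absurd (hc ▸ csInf_le hbdd h) (not_le.mpr ht)
      exact (not_le.mp this).le
    linarith
  have h1mF : 1 - F c = α := by rw [hFcval]; ring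
  refine ⟨?_, h1mF⟩
  -- measurability
  have hmeas : ∀ n, MeasurableSet {ω | S n ω ≤ ch n ω} :=
    fun n => measurableSet_le (hS n) (hch n)
  -- key convergence: P(S ≤ ch) → F c
  have key : Tendsto (fun n => (P {ω | S n ω ≤ ch n ω}).toReal) atTop (nhds (F c)) := by
    rw [Metric.tendsto_atTop]
    intro ε hε
    -- continuity of F at c, quantitative
    obtain ⟨δ0, hδ0, hδ0c⟩ := Metric.continuousAt_iff.mp hFc (ε/4) (by positivity)
    -- dense set of continuity points
    have hD : Dense {x : ℝ | ¬ContinuousAt F x}ᶜ :=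
      Set.Countable.dense_compl ℝ hFmono.countable_not_continuousAt
    obtain ⟨x₁, hx₁c, hx₁⟩ := hD.exists_mem_open isOpen_Ioo
      (nonempty_Ioo.mpr (by linarith : c - δ0 < c))
    obtain ⟨x₂, hx₂c, hx₂⟩ := hD.exists_mem_open isOpen_Ioo
      (nonempty_Ioo.mpr (by linarith : c < c + δ0))
    simp only [mem_compl_iff, mem_setOf_eq, not_not] at hx₁c hx₂c
    obtain ⟨hx₁l, hx₁r⟩ := hx₁
    obtain ⟨hx₂l, hx₂r⟩ := hx₂
    have hFx₁ : |F x₁ - F c| < ε/4 := by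
      have := hδ0c (x := x₁) (by rw [Real.dist_eq]; rw [abs_lt]; constructor <;> linarith)
      rwa [Real.dist_eq] at this
    have hFx₂ : |F x₂ - F c| < ε/4 := by
      have := hδ0c (x := x₂) (by rw [Real.dist_eq]; rw [abs_lt]; constructor <;> linarith)
      rwa [Real.dist_eq] at this
    set δ₁ := c - x₁ with hδ₁def
    set δ₂ := x₂ - c with hδ₂def
    have hδ₁ : 0 < δ₁ := by simp [hδ₁def]; linarith
    have hδ₂ : 0 < δ₂ := by simp [hδ₂def]; linarith
    obtain ⟨N1, hN1⟩ := Metric.tendsto_atTop.mp (hdist x₁ hx₁c) (ε/4) (by positivity)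
    obtain ⟨N2, hN2⟩ := Metric.tendsto_atTop.mp (hdist x₂ hx₂c) (ε/4) (by positivity)
    obtain ⟨N3, hN3⟩ := Metric.tendsto_atTop.mp (hprob δ₁ hδ₁) (ε/4) (by positivity)
    obtain ⟨N4, hN4⟩ := Metric.tendsto_atTop.mp (hprob δ₂ hδ₂) (ε/4) (by positivity)
    refine ⟨max (max N1 N2) (max N3 N4), fun n hn => ?_⟩
    have hn1 := hN1 n (le_trans (le_trans (le_max_left _ _) (le_max_left _ _)) hn)
    have hn2 := hN2 n (le_trans (le_trans (le_max_right _ _) (le_max_left _ _)) hn)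
    have hn3 := hN3 n (le_trans (le_trans (le_max_left _ _) (le_max_right _ _)) hn)
    have hn4 := hN4 n (le_trans (le_trans (le_max_right _ _) (le_max_right _ _)) hn)
    rw [Real.dist_eq] at hn1 hn2 hn3 hn4 ⊢
    rw [sub_zero, abs_of_nonneg ENNReal.toReal_nonneg] at hn3 hn4
    -- subadditivity helper
    have hsub : ∀ (A B C : Set Ω), A ⊆ B ∪ C →
        (P A).toReal ≤ (P B).toReal + (P C).toReal := by
      intro A B C h
      have h1 : P A ≤ P B + P C := (measure_mono h).trans (measure_union_le _ _)
      have h2 := ENNReal.toReal_mono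
        (by exact ENNReal.add_ne_top.mpr ⟨measure_ne_top _ _, measure_ne_top _ _⟩) h1
      rwa [ENNReal.toReal_add (measure_ne_top _ _) (measure_ne_top _ _)] at h2
    -- upper bound
    have hupper : (P {ω | S n ω ≤ ch n ω}).toReal ≤
        (P {ω | S n ω ≤ x₂}).toReal + (P {ω | δ₂ ≤ |ch n ω - c|}).toReal := by
      refine hsub _ _ _ fun ω hω => ?_
      simp only [mem_setOf_eq] at hω
      by_cases h : S n ω ≤ x₂
      · exact Or.inl h
      · refine Or.inr ?_
        push_neg at h
        have : δ₂ ≤ ch n ω - c := by simp only [hδ₂def]; linarith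
        exact this.trans (le_abs_self _)
    -- lower bound
    have hlower : (P {ω | S n ω ≤ x₁}).toReal ≤
        (P {ω | S n ω ≤ ch n ω}).toReal + (P {ω | δ₁ ≤ |ch n ω - c|}).toReal := by
      refine hsub _ _ _ fun ω hω => ?_
      simp only [mem_setOf_eq] at hω
      by_cases h : S n ω ≤ ch n ω
      · exact Or.inl h
      · refine Or.inr ?_
        push_neg at h
        have : δ₁ ≤ -(ch n ω - c) := by simp only [hδ₁def]; linarith
        exact this.trans (neg_le_abs _)
    rw [abs_lt] at hFx₁ hFx₂ hn1 hn2 ⊢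
    constructor <;> linarith
  -- convert to the complement
  have hc1 : ∀ n, (P {ω | ch n ω < S n ω}).toReal =
      1 - (P {ω | S n ω ≤ ch n ω}).toReal := by
    intro n
    have hcompl : {ω | ch n ω < S n ω} = {ω | S n ω ≤ ch n ω}ᶜ := by
      ext ω; simp [not_le]
    rw [hcompl, measure_compl (hmeas n) (measure_ne_top P _), measure_univ,
      ENNReal.toReal_sub_of_le prob_le_one ENNReal.one_ne_top, ENNReal.toReal_one]
  simp only [hc1]
  exact key.const_sub 1
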